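/- For any real symmetric n×n matrix Ã (n ≥ 1), the volumetric–deviatoric crack-driving part Ã^t is the unique minimizer of e ↦ ‖Ã − e‖_F over the closed convex cone of real symmetric n×n matrices e with tr e ≥ 0, i.e., Ã^t is the orthogonal projection of Ã onto that cone with respect to the Frobenius inner product. -/

import Mathlib

open Matrix

/-- The Frobenius inner product `⟨X, Y⟩_F = tr(Xᵀ Y)` on real `n × n` matrices. -/
noncomputable def frobInner {n : ℕ} (X Y : Matrix (Fin n) (Fin n) ℝ) : ℝ :=
  (Xᵀ * Y).trace

/-- The Frobenius norm `‖X‖_F = √⟨X, X⟩_F` on real `n × n` matrices. -/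
noncomputable def frobNorm {n : ℕ} (X : Matrix (Fin n) (Fin n) ℝ) : ℝ :=
  Real.sqrt (frobInner X X)

lemma frobInner_expand {n : ℕ} (X Y : Matrix (Fin n) (Fin n) ℝ) :
    frobInner X Y = ∑ i, ∑ j, X j i * Y j i := by
  simp [frobInner, Matrix.trace, Matrix.mul_apply, Matrix.diag, Matrix.transpose_apply]

lemma frobInner_self_nonneg {n : ℕ} (X : Matrix (Fin n) (Fin n) ℝ) :
    0 ≤ frobInner X X := by
  rw [frobInner_expand]
  exact Finset.sum_nonneg fun i _ => Finset.sum_nonneg fun j _ => mul_self_nonneg _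

lemma frobInner_self_eq_zero {n : ℕ} {X : Matrix (Fin n) (Fin n) ℝ}
    (h : frobInner X X ≤ 0) : X = 0 := by
  rw [frobInner_expand] at h
  have h0 : ∑ i, ∑ j, X j i * X j i = 0 :=
    le_antisymm h (Finset.sum_nonneg fun i _ => Finset.sum_nonneg fun j _ => mul_self_nonneg _)
  ext i j
  have := (Finset.sum_eq_zero_iff_of_nonneg (fun i _ => Finset.sum_nonneg fun j _ => mul_self_nonneg _)).mp h0 j (Finset.mem_univ j)
  have := (Finset.sum_eq_zero_iff_of_nonneg (fun k _ => mul_self_nonneg _)).mp this i (Finset.mem_univ i)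
  simpa using mul_self_eq_zero.mp this

lemma frobInner_smul_one_left {n : ℕ} (c : ℝ) (Z : Matrix (Fin n) (Fin n) ℝ) :
    frobInner (c • (1 : Matrix (Fin n) (Fin n) ℝ)) Z = c * Z.trace := by
  rw [frobInner_expand, Matrix.trace, Finset.mul_sum]
  refine Finset.sum_congr rfl fun i _ => ?_
  simp [Matrix.one_apply, ite_mul, Matrix.diag]

lemma frobInner_add_add {n : ℕ} (P Q : Matrix (Fin n) (Fin n) ℝ) :
    frobInner (P + Q) (P + Q)
      = frobInner P P + 2 * frobInner P Q + frobInner Q Q := by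
  have h : ∀ i j : Fin n, (P + Q) j i * (P + Q) j i
      = P j i * P j i + 2 * (P j i * Q j i) + Q j i * Q j i := fun i j => by
    simp [Matrix.add_apply]; ring
  simp only [frobInner_expand, h, Finset.sum_add_distrib, Finset.mul_sum]

/-- For any real symmetric `n × n` matrix `A` (`n ≥ 1`), the
volumetric–deviatoric crack-driving part `At = (1/n)⟨tr A⟩₊ I + dev A` is the unique minimizer
of `e ↦ ‖A - e‖_F` over the closed convex cone of real symmetric `n × n` matrices `e` with
`tr e ≥ 0`, i.e. `At` is the orthogonal projection of `A` onto that cone with respect to the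
Frobenius inner product. -/
theorem volumetric_deviatoric_is_projection
    {n : ℕ} (hn : 1 ≤ n) (A : Matrix (Fin n) (Fin n) ℝ) (hA : A.IsSymm)
    (At : Matrix (Fin n) (Fin n) ℝ)
    (hAt : At = (max A.trace 0 / (n : ℝ)) • (1 : Matrix (Fin n) (Fin n) ℝ) +
      (A - (A.trace / (n : ℝ)) • (1 : Matrix (Fin n) (Fin n) ℝ))) :
    (At.IsSymm ∧ 0 ≤ At.trace) ∧
      (∀ e : Matrix (Fin n) (Fin n) ℝ, e.IsSymm → 0 ≤ e.trace →
        frobNorm (A - At) ≤ frobNorm (A - e)) ∧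
      (∀ m : Matrix (Fin n) (Fin n) ℝ, m.IsSymm → 0 ≤ m.trace →
        (∀ e : Matrix (Fin n) (Fin n) ℝ, e.IsSymm → 0 ≤ e.trace →
          frobNorm (A - m) ≤ frobNorm (A - e)) → m = At) := by
  have hn0 : (n : ℝ) ≠ 0 := Nat.cast_ne_zero.mpr (by omega)
  set c : ℝ := min A.trace 0 / (n : ℝ) with hc
  have hmin : min A.trace 0 = A.trace - max A.trace 0 := by
    rcases le_total A.trace 0 with h | h <;>
      simp [min_eq_left, min_eq_right, max_eq_left, max_eq_right, h]
  have hkey : A - At = c • (1 : Matrix (Fin n) (Fin n) ℝ) := by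
    rw [hAt, hc, hmin, sub_div, sub_smul]
    module
  have hcle : c ≤ 0 :=
    div_nonpos_of_nonpos_of_nonneg (min_le_right _ _) (Nat.cast_nonneg n)
  -- trace of At
  have htrAt : At.trace = max A.trace 0 := by
    rw [hAt]
    simp [Matrix.trace_add, Matrix.trace_sub, Matrix.trace_smul, Matrix.trace_one, smul_eq_mul]
    field_simp
    ring
  have hcAt : c * At.trace = 0 := by
    rw [htrAt, hc]
    rcases le_total A.trace 0 with h | h <;>
      simp [min_eq_left, min_eq_right, max_eq_left, max_eq_right, h]
  have hsymm : At.IsSymm := by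
    rw [hAt]
    simp [Matrix.IsSymm, Matrix.transpose_add, Matrix.transpose_sub, Matrix.transpose_smul,
      Matrix.transpose_one, hA.eq]
  have htrnn : 0 ≤ At.trace := by rw [htrAt]; exact le_max_right _ _
  -- general expansion
  have hexp : ∀ e : Matrix (Fin n) (Fin n) ℝ,
      frobInner (A - e) (A - e)
        = frobInner (A - At) (A - At) + 2 * (c * (At.trace - e.trace))
          + frobInner (At - e) (At - e) := by
    intro e
    have h1 : A - e = (A - At) + (At - e) := by abel
    rw [h1, frobInner_add_add, hkey]
    simp only [frobInner_smul_one_left, Matrix.trace_sub]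
  have hcross : ∀ e : Matrix (Fin n) (Fin n) ℝ, 0 ≤ e.trace →
      0 ≤ c * (At.trace - e.trace) := by
    intro e he
    rw [mul_sub, hcAt, zero_sub]
    exact neg_nonneg.mpr (mul_nonpos_of_nonpos_of_nonneg hcle he)
  have hle : ∀ e : Matrix (Fin n) (Fin n) ℝ, 0 ≤ e.trace →
      frobInner (A - At) (A - At) ≤ frobInner (A - e) (A - e) := by
    intro e he
    rw [hexp e]
    nlinarith [hcross e he, frobInner_self_nonneg (At - e)]
  refine ⟨⟨hsymm, htrnn⟩, ?_, ?_⟩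
  · intro e _ he
    exact Real.sqrt_le_sqrt (hle e he)
  · intro m hm htm hmin'
    have h2 : frobNorm (A - m) ≤ frobNorm (A - At) := hmin' At hsymm htrnn
    have h3 : frobInner (A - m) (A - m) ≤ frobInner (A - At) (A - At) := by
      by_contra hcon
      push_neg at hcon
      have := Real.sqrt_lt_sqrt (frobInner_self_nonneg _) hcon
      exact absurd h2 (not_le.mpr this)
    have h4 : frobInner (At - m) (At - m) ≤ 0 := by
      have := hexp m
      nlinarith [hcross m htm]
    have := frobInner_self_eq_zero h4
    have : At = m := by rwa [sub_eq_zero] at this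
    exact this.symm
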